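/- Let P ⊆ ℝ^d be a finite set of points that is a corral and let x be the minimum norm point of the affine hull of P. Let q be a point in the linear span of {x} together with the orthogonal complement of the linear span of P, and assume ⟨q, x⟩ < min{‖q‖², ‖x‖²}. Then P ∪ {q} is a corral, and the point of minimum Euclidean norm in conv(P ∪ {q}) is y = λ·x + (1 − λ)·q with λ = ⟨q, q − x⟩ / ‖q − x‖², which is a strict convex combination of x and q (0 < λ < 1). -/

import Mathlib

open InnerProductSpace Set Finset RealInnerProductSpace


open InnerProductSpace Set Finset

section Aux

variable {E : Type*} [NormedAddCommGroup E] [NormedSpace ℝ E]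

/-- intrinsic interior equals interior when the affine span is everything -/
lemma my_intrinsic_eq_interior {s : Set E}
    (h : affineSpan ℝ s = ⊤) : intrinsicInterior ℝ s = interior s := by
  refine subset_antisymm ?_ interior_subset_intrinsicInterior
  rintro z hz
  rw [mem_intrinsicInterior] at hz
  obtain ⟨y, hy, rfl⟩ := hz
  have hopen : IsOpen ((affineSpan ℝ s : Set E)) := by
    rw [h]; exact isOpen_univ
  have hemb := hopen.isOpenEmbedding_subtypeVal
  have hsub := hemb.isOpenMap.image_interior_subset ((↑) ⁻¹' s)
  have himg : (Subtype.val '' (Subtype.val ⁻¹' s : Set ((affineSpan ℝ s : Set E)))) = s := by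
    apply subset_antisymm
    · rintro _ ⟨a, ha, rfl⟩; exact ha
    · intro a ha
      have hmem : a ∈ affineSpan ℝ s := by rw [h]; trivial
      exact ⟨⟨a, hmem⟩, ha, rfl⟩
  rw [himg] at hsub
  exact hsub (mem_image_of_mem _ hy)

end Aux

lemma relint_iff {E : Type*} [NormedAddCommGroup E] [NormedSpace ℝ E]
    (S : Set E) (hS : S.Finite) (hind : AffineIndependent ℝ ((↑) : S → E))
    (hne : S.Nonempty) (y : E) :
    y ∈ intrinsicInterior ℝ (convexHull ℝ S) ↔
      ∃ w : E → ℝ, (∀ p ∈ S, 0 < w p) ∧ ∑ p ∈ hS.toFinset, w p = 1 ∧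
        ∑ p ∈ hS.toFinset, w p • p = y := by
  classical
  obtain ⟨p₀, hp₀⟩ := hne
  haveI : Fintype S := hS.fintype
  set V : Submodule ℝ E := vectorSpan ℝ S with hV
  let φ : V →ᵃⁱ[ℝ] E :=
    ((AffineIsometryEquiv.constVAdd ℝ E p₀).toAffineIsometry).comp
      V.subtypeₗᵢ.toAffineIsometry
  have hφ : ∀ v : V, φ v = p₀ + (v : E) := fun v => by
    simp [φ, AffineIsometryEquiv.constVAdd, vadd_eq_add]
    rfl
  let b : S → V := fun i => ⟨(i : E) - p₀, by
    have := vsub_mem_vectorSpan ℝ i.2 hp₀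
    simpa [vsub_eq_sub] using this⟩
  have hφb : ∀ i : S, φ (b i) = (i : E) := fun i => by
    rw [hφ]; simp [b]
  have hφbfun : (φ.toAffineMap ∘ b) = ((↑) : S → E) := funext fun i => hφb i
  have hbind : AffineIndependent ℝ b := by
    apply AffineIndependent.of_comp φ.toAffineMap
    rwa [hφbfun]
  have hrangeb : φ.toAffineMap '' Set.range b = S := by
    rw [← Set.range_comp, hφbfun, Subtype.range_coe]
  have hlin : ∀ u : V, φ.toAffineMap.linear u = (u : E) := fun u => by
    have h0 : u = u -ᵥ (0 : V) := by simp
    rw [h0, AffineMap.linearMap_vsub]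
    show φ u -ᵥ φ 0 = _
    rw [hφ, hφ]
    simp
  have hlininj : Function.Injective φ.toAffineMap.linear := fun a b h => by
    apply Subtype.ext; rw [← hlin a, ← hlin b, h]
  have hmaptop : Submodule.map φ.toAffineMap.linear ⊤ = vectorSpan ℝ S := by
    apply le_antisymm
    · intro u hu
      obtain ⟨v, -, rfl⟩ := Submodule.mem_map.mp hu
      rw [hlin]; exact v.2
    · intro u hu
      exact Submodule.mem_map.mpr ⟨⟨u, hu⟩, Submodule.mem_top, hlin _⟩
  have htotv : vectorSpan ℝ (Set.range b) = ⊤ := by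
    apply Submodule.map_injective_of_injective hlininj
    rw [AffineMap.vectorSpan_image_eq_submodule_map, hrangeb, hmaptop]
  have htot : affineSpan ℝ (Set.range b) = ⊤ := by
    rw [AffineSubspace.affineSpan_eq_top_iff_vectorSpan_eq_top_of_nonempty ℝ _ _
      ⟨b ⟨p₀, hp₀⟩, Set.mem_range_self _⟩]
    exact htotv
  let B : AffineBasis S ℝ V := ⟨b, hbind, htot⟩
  have hBcoe : ⇑B = b := rfl
  have hφBfun : (⇑φ.toAffineMap ∘ ⇑B) = ((↑) : S → E) := hφbfun
  have hrangeB : φ.toAffineMap '' Set.range ⇑B = S := hrangeb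
  have htotB : affineSpan ℝ (Set.range ⇑B) = ⊤ := htot
  have hconv : convexHull ℝ S = ⇑φ '' convexHull ℝ (Set.range ⇑B) := by
    rw [show ⇑φ '' convexHull ℝ (Set.range ⇑B)
        = φ.toAffineMap '' convexHull ℝ (Set.range ⇑B) from rfl,
      AffineMap.image_convexHull, hrangeB]
  have hchain : intrinsicInterior ℝ (convexHull ℝ S) = ⇑φ '' {z | ∀ i, 0 < B.coord i z} := by
    rw [hconv, AffineIsometry.image_intrinsicInterior,
      my_intrinsic_eq_interior (by rw [affineSpan_convexHull]; exact htotB),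
      B.interior_convexHull]
  have hsum_conv : ∀ f : E → ℝ, ∑ p ∈ hS.toFinset, f p = ∑ i : S, f ↑i := fun f =>
    Finset.sum_subtype hS.toFinset (fun x => hS.mem_toFinset) f
  have hsum_conv' : ∀ f : E → E, ∑ p ∈ hS.toFinset, f p = ∑ i : S, f ↑i := fun f =>
    Finset.sum_subtype hS.toFinset (fun x => hS.mem_toFinset) f
  rw [hchain]
  constructor
  · rintro ⟨z, hz, rfl⟩
    refine ⟨fun p => if h : p ∈ S then B.coord ⟨p, h⟩ z else 0, ?_, ?_, ?_⟩
    · intro p hp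
      have := hz ⟨p, hp⟩
      simpa [hp] using this
    · rw [hsum_conv]
      rw [show (∑ i : S, if h : (i:E) ∈ S then B.coord ⟨(i:E), h⟩ z else 0)
          = ∑ i : S, B.coord i z from Finset.sum_congr rfl fun i _ => by simp [i.2]]
      exact B.sum_coord_apply_eq_one z
    · have hsum1 : ∑ i : S, B.coord i z = 1 := B.sum_coord_apply_eq_one z
      have hz_comb : (Finset.univ.affineCombination ℝ ⇑B fun i => B.coord i z) = z :=
        B.affineCombination_coord_eq_self z
      have hmap := Finset.map_affineCombination Finset.univ (⇑B) (fun i => B.coord i z)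
        hsum1 φ.toAffineMap
      rw [hz_comb, hφBfun, Finset.affineCombination_eq_linear_combination _ _ _ hsum1] at hmap
      rw [show (∑ p ∈ hS.toFinset, (if h : p ∈ S then B.coord ⟨p, h⟩ z else 0) • p)
            = ∑ i : S, B.coord i z • (i : E) from ?_]
      · exact hmap.symm
      · rw [hsum_conv' (fun p => (if h : p ∈ S then B.coord ⟨p, h⟩ z else 0) • p)]
        exact Finset.sum_congr rfl fun i _ => by simp [i.2]
  · rintro ⟨w, hwpos, hw1, hwy⟩
    have hw1' : ∑ i : S, w ↑i = 1 := by rw [← hsum_conv]; exact hw1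
    refine ⟨Finset.univ.affineCombination ℝ ⇑B (fun i => w ↑i), ?_, ?_⟩
    · intro i
      rw [B.coord_apply_combination_of_mem (Finset.mem_univ i) hw1']
      exact hwpos _ i.2
    · have hmap := Finset.map_affineCombination Finset.univ (⇑B) (fun i => w ↑i)
        hw1' φ.toAffineMap
      rw [hφBfun] at hmap
      have h2 : (Finset.univ.affineCombination ℝ (Subtype.val : S → E) fun i => w ↑i)
          = ∑ i : S, w ↑i • (i : E) :=
        Finset.affineCombination_eq_linear_combination _ _ _ hw1'
      rw [hsum_conv' (fun p => w p • p)] at hwy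
      exact hmap.trans (h2.trans hwy)


section Helpers

variable {E : Type*} [NormedAddCommGroup E] [InnerProductSpace ℝ E]

lemma inner_eq_normsq_of_min {A : AffineSubspace ℝ E} {x : E} (hx : x ∈ A)
    (hmin : ∀ w ∈ A, ‖x‖ ≤ ‖w‖) : ∀ w ∈ A, ⟪x, w⟫_ℝ = ‖x‖ ^ 2 := by
  intro w hw
  have key : ⟪x, w - x⟫_ℝ = 0 := by
    rcases eq_or_ne w x with rfl | hne
    · simp
    set a := ⟪x, w - x⟫_ℝ with ha
    set c := ‖w - x‖ ^ 2 with hc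
    have hcpos : 0 < c := by
      have hne0 : ‖w - x‖ ≠ 0 := norm_ne_zero_iff.mpr (sub_ne_zero.mpr hne)
      positivity
    have hmem : ∀ t : ℝ, x + t • (w - x) ∈ A := by
      intro t
      have hd : w -ᵥ x ∈ A.direction := AffineSubspace.vsub_mem_direction hw hx
      have h2 : t • (w - x) ∈ A.direction := by
        have := A.direction.smul_mem t hd
        simpa [vsub_eq_sub] using this
      have := AffineSubspace.vadd_mem_of_mem_direction h2 hx
      simpa [vadd_eq_add, add_comm] using this
    have h1 := hmin _ (hmem (-a / c))
    have h2 : ‖x + (-a / c) • (w - x)‖ ^ 2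
        = ‖x‖ ^ 2 + 2 * (-a / c) * a + (-a / c) ^ 2 * c := by
      rw [norm_add_sq_real, real_inner_smul_right, norm_smul]
      simp only [Real.norm_eq_abs]
      rw [mul_pow, sq_abs]
      ring
    have h3 : ‖x‖ ^ 2 ≤ ‖x + (-a / c) • (w - x)‖ ^ 2 := by
      have := pow_le_pow_left₀ (norm_nonneg x) h1 2
      exact this
    rw [h2] at h3
    have h4 : ‖x‖ ^ 2 + 2 * (-a / c) * a + (-a / c) ^ 2 * c = ‖x‖ ^ 2 - a ^ 2 / c := by
      field_simp
      ring
    rw [h4] at h3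
    have h5 : a ^ 2 / c ≤ 0 := by linarith
    have h6 : 0 ≤ a ^ 2 / c := div_nonneg (sq_nonneg a) hcpos.le
    have h7 : a ^ 2 / c = 0 := le_antisymm h5 h6
    have h8 : a ^ 2 = 0 := by
      field_simp at h7
      simpa using h7
    exact pow_eq_zero_iff two_ne_zero |>.mp h8
  have hsplit : ⟪x, w⟫_ℝ = ⟪x, w - x⟫_ℝ + ⟪x, x⟫_ℝ := by
    rw [← inner_add_right]
    congr 1
    abel
  rw [hsplit, key, real_inner_self_eq_norm_sq]
  ring

lemma norm_le_of_inner_eq_normsq {y w : E} (h : ⟪y, w⟫_ℝ = ‖y‖ ^ 2) : ‖y‖ ≤ ‖w‖ := by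
  have h2 : ‖w‖ ^ 2 = ‖w - y‖ ^ 2 + 2 * ⟪w - y, y⟫_ℝ + ‖y‖ ^ 2 := by
    rw [← norm_add_sq_real, sub_add_cancel]
  have h3 : ⟪w - y, y⟫_ℝ = 0 := by
    rw [inner_sub_left, real_inner_self_eq_norm_sq, real_inner_comm, h]
    ring
  rw [h3] at h2
  nlinarith [norm_nonneg (w - y), norm_nonneg w, norm_nonneg y, sq_nonneg (‖w - y‖)]

end Helpers

/-- A finite set `S` of affinely independent points is a *corral* if the point of minimum
Euclidean norm in the affine hull of `S` (the affine minimizer) lies in the relative interior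
of the convex hull of `S`. -/
def IsCorral {d : ℕ} (S : Set (EuclideanSpace ℝ (Fin d))) : Prop :=
  S.Finite ∧ AffineIndependent ℝ ((↑) : S → EuclideanSpace ℝ (Fin d)) ∧
    ∃ m : EuclideanSpace ℝ (Fin d), m ∈ affineSpan ℝ S ∧
      (∀ w ∈ affineSpan ℝ S, ‖m‖ ≤ ‖w‖) ∧
      m ∈ intrinsicInterior ℝ (convexHull ℝ S)

/-- If `P` is a corral with affine minimizer `x`, and `q ∈ span(x, (span P)^⊥)` satisfies
`⟪q, x⟫ < min{‖q‖², ‖x‖²}`, then `P ∪ {q}` is a corral and the minimum norm point of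
`conv (P ∪ {q})` is `λ•x + (1-λ)•q` with `λ = ⟪q, q - x⟫ / ‖q - x‖² ∈ (0, 1)`. -/
theorem stmt_6 (d : ℕ) (P : Set (EuclideanSpace ℝ (Fin d)))
    (hPc : IsCorral P)
    (x : EuclideanSpace ℝ (Fin d))
    (hxmem : x ∈ affineSpan ℝ P) (hxmin : ∀ w ∈ affineSpan ℝ P, ‖x‖ ≤ ‖w‖)
    (q : EuclideanSpace ℝ (Fin d))
    (hq : q ∈ Submodule.span ℝ {x} ⊔ (Submodule.span ℝ P)ᗮ)
    (hqx : ⟪q, x⟫_ℝ < min (‖q‖ ^ 2) (‖x‖ ^ 2)) :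
    IsCorral (P ∪ {q}) ∧
      0 < ⟪q, q - x⟫_ℝ / ‖q - x‖ ^ 2 ∧ ⟪q, q - x⟫_ℝ / ‖q - x‖ ^ 2 < 1 ∧
      (⟪q, q - x⟫_ℝ / ‖q - x‖ ^ 2) • x + (1 - ⟪q, q - x⟫_ℝ / ‖q - x‖ ^ 2) • q
          ∈ convexHull ℝ (P ∪ {q}) ∧
      ∀ w ∈ convexHull ℝ (P ∪ {q}),
        ‖(⟪q, q - x⟫_ℝ / ‖q - x‖ ^ 2) • x + (1 - ⟪q, q - x⟫_ℝ / ‖q - x‖ ^ 2) • q‖ ≤ ‖w‖ := by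
  classical
  obtain ⟨hqCle, hqAle⟩ := lt_min_iff.mp hqx
  -- basic scalar facts
  have hqnex : q ≠ x := by
    intro h
    rw [h, real_inner_self_eq_norm_sq] at hqAle
    exact lt_irrefl _ hqAle
  have hn : (0:ℝ) < ‖q - x‖ ^ 2 := by
    have : ‖q - x‖ ≠ 0 := norm_ne_zero_iff.mpr (sub_ne_zero.mpr hqnex)
    positivity
  have hnum : ⟪q, q - x⟫_ℝ = ‖q‖ ^ 2 - ⟪q, x⟫_ℝ := by
    rw [inner_sub_right, real_inner_self_eq_norm_sq]
  have hn_expand : ‖q - x‖ ^ 2 = ‖q‖ ^ 2 - 2 * ⟪q, x⟫_ℝ + ‖x‖ ^ 2 := norm_sub_sq_real q x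
  set lam : ℝ := ⟪q, q - x⟫_ℝ / ‖q - x‖ ^ 2 with hlam
  have hlam_pos : 0 < lam := div_pos (by linarith) hn
  have hlam_lt : lam < 1 := by
    rw [hlam, div_lt_one hn]
    linarith
  have hkey : lam * ‖q - x‖ ^ 2 = ‖q‖ ^ 2 - ⟪q, x⟫_ℝ := by
    rw [hlam, div_mul_cancel₀ _ (ne_of_gt hn)]
    exact hnum
  set y : EuclideanSpace ℝ (Fin d) := lam • x + (1 - lam) • q with hy
  -- destructure the corral hypothesis
  obtain ⟨hPfin, hPind, m, hmmem, hmmin, hmint⟩ := hPc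
  have hPne : P.Nonempty := by
    rcases Set.eq_empty_or_nonempty P with rfl | h
    · exfalso
      rw [AffineSubspace.span_empty] at hxmem
      have h0 : x ∈ ((⊥ : AffineSubspace ℝ (EuclideanSpace ℝ (Fin d))) :
          Set (EuclideanSpace ℝ (Fin d))) := hxmem
      rw [AffineSubspace.bot_coe] at h0
      exact h0
    · exact h
  have hinner_x : ∀ w ∈ affineSpan ℝ P, ⟪x, w⟫_ℝ = ‖x‖ ^ 2 :=
    inner_eq_normsq_of_min hxmem hxmin
  have hinner_m : ∀ w ∈ affineSpan ℝ P, ⟪m, w⟫_ℝ = ‖m‖ ^ 2 :=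
    inner_eq_normsq_of_min hmmem hmmin
  have hm_eq : m = x := by
    have h1 : ⟪x, m⟫_ℝ = ‖x‖ ^ 2 := hinner_x m hmmem
    have h2 : ⟪m, x⟫_ℝ = ‖m‖ ^ 2 := hinner_m x hxmem
    have h3 : ⟪x, m⟫_ℝ = ⟪m, x⟫_ℝ := real_inner_comm m x
    have h4 : ‖m - x‖ ^ 2 = ‖m‖ ^ 2 - 2 * ⟪m, x⟫_ℝ + ‖x‖ ^ 2 := norm_sub_sq_real m x
    have h5 : ‖m - x‖ ^ 2 = 0 := by nlinarith
    have h6 : m - x = 0 := by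
      have := pow_eq_zero_iff (two_ne_zero) |>.mp h5
      exact norm_eq_zero.mp this
    exact sub_eq_zero.mp h6
  have hx_int : x ∈ intrinsicInterior ℝ (convexHull ℝ P) := hm_eq ▸ hmint
  -- q is not in the affine span of P
  have hq_notin_span : q ∉ affineSpan ℝ P := by
    intro h
    have := hinner_x q h
    rw [real_inner_comm] at this
    linarith
  have hq_notin_P : q ∉ P := fun h => hq_notin_span (mem_affineSpan ℝ h)
  -- decompose q
  have hx_span : x ∈ Submodule.span ℝ P := affineSpan_subset_span hxmem
  obtain ⟨s, hs, v, hv, hsum⟩ := Submodule.mem_sup.mp hq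
  obtain ⟨α, rfl⟩ := Submodule.mem_span_singleton.mp hs
  have hvK := (Submodule.mem_orthogonal _ v).mp hv
  have hqp : ∀ p ∈ P, ⟪q, p⟫_ℝ = ⟪q, x⟫_ℝ := by
    intro p hp
    have hxp : ⟪x, p⟫_ℝ = ‖x‖ ^ 2 := hinner_x p (mem_affineSpan ℝ hp)
    have hvp : ⟪p, v⟫_ℝ = 0 := hvK p (Submodule.subset_span hp)
    have hvx : ⟪x, v⟫_ℝ = 0 := hvK x hx_span
    have e1 : ⟪q, p⟫_ℝ = α * ⟪x, p⟫_ℝ + ⟪v, p⟫_ℝ := by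
      rw [← hsum, inner_add_left, real_inner_smul_left]
    have e2 : ⟪q, x⟫_ℝ = α * ⟪x, x⟫_ℝ + ⟪v, x⟫_ℝ := by
      rw [← hsum, inner_add_left, real_inner_smul_left]
    rw [e1, e2, hxp, real_inner_self_eq_norm_sq, real_inner_comm p v, hvp,
      real_inner_comm x v, hvx]
  -- the new set S
  set S : Set (EuclideanSpace ℝ (Fin d)) := P ∪ {q} with hS
  have hq_memS : q ∈ S := Set.mem_union_right _ rfl
  have hSfin : S.Finite := hPfin.union (Set.finite_singleton q)
  have hSne : S.Nonempty := ⟨q, hq_memS⟩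
  -- affine independence of S
  have hSind : AffineIndependent ℝ ((↑) : S → EuclideanSpace ℝ (Fin d)) := by
    apply AffineIndependent.affineIndependent_of_notMem_span (i := (⟨q, hq_memS⟩ : S))
    · let emb : { z : S // z ≠ (⟨q, hq_memS⟩ : S) } ↪ P :=
        ⟨fun z => ⟨((z : S) : EuclideanSpace ℝ (Fin d)), by
          rcases (z : S).2 with h | h
          · exact h
          · exact absurd (Subtype.ext (by simpa using h)) z.2⟩,
        fun a b h => by simpa [Subtype.ext_iff] using h⟩
      exact hPind.comp_embedding emb
    · have himg : ((↑) : S → EuclideanSpace ℝ (Fin d)) ''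
          {z | z ≠ (⟨q, hq_memS⟩ : S)} = P := by
        ext u
        constructor
        · rintro ⟨z, hz, rfl⟩
          rcases z.2 with h | h
          · exact h
          · exact absurd (Subtype.ext (by simpa using h)) hz
        · intro hu
          refine ⟨⟨u, Set.mem_union_left _ hu⟩, ?_, rfl⟩
          intro hc
          exact hq_notin_P (by
            have := congrArg Subtype.val hc
            simp only at this
            rwa [this] at hu)
      rw [himg]
      exact hq_notin_span
  -- extract positive weights for x on P
  obtain ⟨w, hwpos, hw1, hwx⟩ := (relint_iff P hPfin hPind hPne x).mp hx_int
  -- build weights for y on S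
  have hq_notin_tP : q ∉ hPfin.toFinset := by
    rw [Set.Finite.mem_toFinset]; exact hq_notin_P
  have htS : hSfin.toFinset = insert q hPfin.toFinset := by
    ext u
    simp only [Set.Finite.mem_toFinset, Finset.mem_insert, hS, Set.mem_union,
      Set.mem_singleton_iff]
    tauto
  set W : EuclideanSpace ℝ (Fin d) → ℝ := fun p => if p = q then 1 - lam else lam * w p with hW
  have hWapp : ∀ p, W p = if p = q then 1 - lam else lam * w p := fun p => rfl
  have hWpos : ∀ p ∈ S, 0 < W p := by
    intro p hp
    rw [hWapp]
    by_cases h : p = q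
    · rw [if_pos h]; linarith
    · rw [if_neg h]
      rcases hp with hp | hp
      · exact mul_pos hlam_pos (hwpos p hp)
      · exact absurd hp h
  have hWP : ∀ p ∈ hPfin.toFinset, W p = lam * w p := by
    intro p hp
    rw [Set.Finite.mem_toFinset] at hp
    rw [hWapp p, if_neg (fun h : p = q => hq_notin_P (h ▸ hp))]
  have hW1 : ∑ p ∈ hSfin.toFinset, W p = 1 := by
    rw [htS, Finset.sum_insert hq_notin_tP, Finset.sum_congr rfl hWP,
      hWapp q, if_pos rfl, ← Finset.mul_sum, hw1]
    ring
  have hWy : ∑ p ∈ hSfin.toFinset, W p • p = y := by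
    rw [htS, Finset.sum_insert hq_notin_tP]
    have : ∀ p ∈ hPfin.toFinset, W p • p = lam • (w p • p) := by
      intro p hp
      rw [hWP p hp, smul_smul]
    rw [Finset.sum_congr rfl this, ← Finset.smul_sum, hwx, hWapp q, if_pos rfl, hy]
    abel
  have hy_relint : y ∈ intrinsicInterior ℝ (convexHull ℝ S) :=
    (relint_iff S hSfin hSind hSne y).mpr ⟨W, hWpos, hW1, hWy⟩
  have hy_conv : y ∈ convexHull ℝ S := intrinsicInterior_subset hy_relint
  -- inner product of y with everything in the affine span of S is constant
  have hyx_yq : ⟪y, x⟫_ℝ = ⟪y, q⟫_ℝ := by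
    have e1 : ⟪y, x⟫_ℝ = lam * ‖x‖ ^ 2 + (1 - lam) * ⟪q, x⟫_ℝ := by
      rw [hy, inner_add_left, real_inner_smul_left, real_inner_smul_left,
        real_inner_self_eq_norm_sq]
    have e2 : ⟪y, q⟫_ℝ = lam * ⟪q, x⟫_ℝ + (1 - lam) * ‖q‖ ^ 2 := by
      rw [hy, inner_add_left, real_inner_smul_left, real_inner_smul_left,
        real_inner_self_eq_norm_sq, real_inner_comm x q]
    rw [e1, e2]
    linear_combination hkey - lam * hn_expand
  have hconst : ∀ z ∈ S, ⟪y, z⟫_ℝ = ⟪y, x⟫_ℝ := by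
    rintro z (hz | hz)
    · have h1 : ⟪x, z⟫_ℝ = ‖x‖ ^ 2 := hinner_x z (mem_affineSpan ℝ hz)
      have h2 : ⟪q, z⟫_ℝ = ⟪q, x⟫_ℝ := hqp z hz
      rw [hy, inner_add_left, inner_add_left, real_inner_smul_left, real_inner_smul_left,
        real_inner_smul_left, real_inner_smul_left, h1, h2, real_inner_self_eq_norm_sq]
    · rw [hz, hyx_yq]
  have hspan_const : ∀ u ∈ affineSpan ℝ S, ⟪y, u⟫_ℝ = ⟪y, x⟫_ℝ := by
    intro u hu
    set f : EuclideanSpace ℝ (Fin d) →ᵃ[ℝ] ℝ :=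
      ((innerSL ℝ y).toLinearMap).toAffineMap with hf
    have hfapp : ∀ z, f z = ⟪y, z⟫_ℝ := fun z => rfl
    set Q : AffineSubspace ℝ (EuclideanSpace ℝ (Fin d)) :=
      AffineSubspace.comap f (affineSpan ℝ ({⟪y, x⟫_ℝ} : Set ℝ)) with hQ
    have hSQ : S ⊆ Q := by
      intro z hz
      show f z ∈ affineSpan ℝ ({⟪y, x⟫_ℝ} : Set ℝ)
      rw [hfapp, hconst z hz]
      exact mem_affineSpan ℝ rfl
    have := (affineSpan_le.mpr hSQ) hu
    have h2 : f u ∈ affineSpan ℝ ({⟪y, x⟫_ℝ} : Set ℝ) := this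
    rw [AffineSubspace.mem_affineSpan_singleton] at h2
    rw [← hfapp u]
    exact h2
  have hyy : ⟪y, y⟫_ℝ = ⟪y, x⟫_ℝ := by
    nth_rewrite 2 [hy]
    rw [inner_add_right, real_inner_smul_right, real_inner_smul_right, hyx_yq]
    ring
  have hnormy : ‖y‖ ^ 2 = ⟪y, x⟫_ℝ := by
    rw [← real_inner_self_eq_norm_sq]
    exact hyy
  have hy_spanmem : y ∈ affineSpan ℝ S :=
    convexHull_subset_affineSpan S hy_conv
  have hy_min_span : ∀ u ∈ affineSpan ℝ S, ‖y‖ ≤ ‖u‖ := by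
    intro u hu
    apply norm_le_of_inner_eq_normsq
    rw [hnormy]
    exact hspan_const u hu
  have hy_min_conv : ∀ u ∈ convexHull ℝ S, ‖y‖ ≤ ‖u‖ := fun u hu =>
    hy_min_span u (convexHull_subset_affineSpan S hu)
  exact ⟨⟨hSfin, hSind, y, hy_spanmem, hy_min_span, hy_relint⟩,
    hlam_pos, hlam_lt, hy_conv, hy_min_conv⟩
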